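/- For every admissible path p ∈ P_{a,b} and every s ≥ 1: h1(p(2s+1), p(2s), p(2s−1)) = n − (1/2)·|r_p(s+2) − r_p(s)|, h2(p(2s+2), p(2s+1), p(2s)) = m, and h3(p(2s+1), p(2s)) = n. -/
import Mathlib


namespace Stmt4

/-- The ground-state path value `\bar p(s; a, b)`. -/
def barp (m n a b : ℤ) (s : ℕ) : ℤ :=
  if s % 2 = 1 then n - b else if s % 4 = 0 then a + b else m - n - a + b

/-- Membership in the path space `P_{a,b}`. -/
def IsPath (m n a b : ℤ) (p : ℕ → ℤ) : Prop :=
  (∀ s : ℕ, 1 ≤ s → 0 ≤ p s ∧ p s ≤ (if s % 2 = 1 then n else m)) ∧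
  ∃ S : ℕ, ∀ s ≥ S, p s = barp m n a b s

/-- The eventual (ground-state) weight sequence `ā(s)`. -/
def abar (m n a b : ℤ) (s : ℕ) : ℤ :=
  if s % 4 = 1 then a + b
  else if s % 4 = 2 then n + a - b
  else if s % 4 = 3 then m - n - a + b
  else m - a - b

/-- `A` is the weight sequence `a_p` attached to the path `p`. -/
def IsWeightSeq (m n a b : ℤ) (p A : ℕ → ℤ) : Prop :=
  (∀ s : ℕ, 1 ≤ s → A s = A (s + 1) + (if s % 2 = 1 then n else m) - 2 * p s) ∧
  ∃ S : ℕ, ∀ s ≥ S, A s = abar m n a b s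

/-- The admissibility inequalities for the weight sequence `A = a_p`. -/
def AdmIneq (m n : ℤ) (p A : ℕ → ℤ) : Prop :=
  ∀ s : ℕ, 1 ≤ s →
    p s ≤ A (s + 1) ∧ (if s % 2 = 1 then n else m) - p s ≤ m - A (s + 1)

/-- `{a}_b` : `a` if `a ≤ b`, and `2b - a` if `a ≥ b`. -/
def curly (x c : ℤ) : ℤ := if x ≤ c then x else 2 * c - x

def h1 (m n i j k : ℤ) : ℤ :=
  if i + j ≤ min m n then curly (k + j) n
  else if m ≤ i + j ∧ i + j ≤ n then curly (k + i + 2 * j - m) n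
  else if n ≤ i + j ∧ i + j ≤ m then curly (k + n - i) n
  else curly (k + n - m + j) n

def h2 (m n i j k : ℤ) : ℤ :=
  if j + k ≤ min m n then curly (i + j) m
  else if m ≤ j + k ∧ j + k ≤ n then curly (i + m - k) m
  else if n ≤ j + k ∧ j + k ≤ m then curly (i + k + 2 * j - n) m
  else curly (i + j + m - n) m

def h3 (m n i j : ℤ) : ℤ :=
  if i + j ≤ min m n then i + j
  else if m ≤ i + j ∧ i + j ≤ n then m
  else if n ≤ i + j ∧ i + j ≤ m then n
  else m + n - i - j

/-- The `s`-th term in the sum defining the crystal energy. -/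
def eterm (m n a b : ℤ) (p : ℕ → ℤ) (s : ℕ) : ℤ :=
  (h1 m n (p (2 * s + 1)) (p (2 * s)) (p (2 * s - 1))
    - h1 m n (barp m n a b (2 * s + 1)) (barp m n a b (2 * s)) (barp m n a b (2 * s - 1)))
  + (h2 m n (p (2 * s + 2)) (p (2 * s + 1)) (p (2 * s))
    - h2 m n (barp m n a b (2 * s + 2)) (barp m n a b (2 * s + 1)) (barp m n a b (2 * s)))
  + 2 * (h3 m n (p (2 * s + 1)) (p (2 * s))
    - h3 m n (barp m n a b (2 * s + 1)) (barp m n a b (2 * s)))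

/-- `H` is the crystal energy `h(p)`; the sum has finitely many nonzero terms, so the
partial sums are eventually constant. -/
def IsEnergy (m n a b : ℤ) (p : ℕ → ℤ) (H : ℤ) : Prop :=
  ∃ S0 : ℕ, ∀ S ≥ S0, H = -∑ s ∈ Finset.Icc 1 S, (s : ℤ) * eterm m n a b p s

/-- The RSOS path `r_p` read off from the weight sequence `A = a_p`. -/
def rOf (m : ℤ) (A : ℕ → ℤ) (s : ℕ) : ℤ :=
  if s % 2 = 1 then A (2 * s - 1) else m - A (2 * s - 1)

theorem stmt4 (m n a b : ℤ) (hmn : n < m) (hn : 1 ≤ n)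
    (ha0 : 0 ≤ a) (ha1 : a ≤ m - n) (hb0 : 0 ≤ b) (hb1 : b ≤ n)
    (p A : ℕ → ℤ) (hp : IsPath m n a b p)
    (hA : IsWeightSeq m n a b p A) (hadm : AdmIneq m n p A) :
    ∀ s : ℕ, 1 ≤ s →
      2 * h1 m n (p (2 * s + 1)) (p (2 * s)) (p (2 * s - 1))
          = 2 * n - |rOf m A (s + 2) - rOf m A s| ∧
      h2 m n (p (2 * s + 2)) (p (2 * s + 1)) (p (2 * s)) = m ∧
      h3 m n (p (2 * s + 1)) (p (2 * s)) = n := by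
  obtain ⟨hrec, _⟩ := hA
  have heven : ∀ e e' : ℕ, e' = e + 1 → 1 ≤ e → e % 2 = 0 →
      A e' = p e ∧ A e = m - p e := by
    intro e e' he' he hpar
    subst he'
    have h1 := hadm e he
    have h2 := hrec e he
    rw [if_neg (by omega)] at h1 h2
    constructor <;> omega
  have hodd : ∀ o o' : ℕ, o' = o + 1 → 1 ≤ o → o % 2 = 1 →
      A o = A o' + n - 2 * p o ∧ p o ≤ A o' ∧ A o' ≤ m - n + p o := by
    intro o o' ho' ho hpar
    subst ho'
    have h1 := hadm o ho
    have h2 := hrec o ho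
    rw [if_pos hpar] at h1 h2
    exact ⟨h2, h1.1, by omega⟩
  intro s hs
  obtain ⟨t, rfl⟩ : ∃ t, s = t + 1 := ⟨s - 1, by omega⟩
  obtain ⟨f1, f2⟩ := heven (2*t+2) (2*t+3) (by omega) (by omega) (by omega)
  obtain ⟨f3, f4⟩ := heven (2*t+4) (2*t+5) (by omega) (by omega) (by omega)
  obtain ⟨f5, f6, f7⟩ := hodd (2*t+1) (2*t+2) (by omega) (by omega) (by omega)
  obtain ⟨f8, f9, f10⟩ := hodd (2*t+3) (2*t+4) (by omega) (by omega) (by omega)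
  have habs : |rOf m A (t + 1 + 2) - rOf m A (t + 1)| = |A (2*t+5) - A (2*t+1)| := by
    unfold rOf
    simp only [show (2*(t+1+2)-1 : ℕ) = 2*t+5 from by omega,
               show (2*(t+1)-1 : ℕ) = 2*t+1 from by omega]
    rcases Nat.mod_two_eq_zero_or_one (t+1) with h | h
    · rw [if_neg (by omega), if_neg (by omega),
        show m - A (2*t+5) - (m - A (2*t+1)) = -(A (2*t+5) - A (2*t+1)) from by ring,
        abs_neg]
    · rw [if_pos (by omega), if_pos (by omega)]
  simp only [show (2*(t+1)+1 : ℕ) = 2*t+3 from by omega,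
             show (2*(t+1) : ℕ) = 2*t+2 from by omega,
             show (2*(t+1)-1 : ℕ) = 2*t+1 from by omega,
             show (2*(t+1)+2 : ℕ) = 2*t+4 from by omega,
             show (2*t+2+1 : ℕ) = 2*t+3 from by omega,
             show (2*t+2+2 : ℕ) = 2*t+4 from by omega,
             show (2*t+2-1 : ℕ) = 2*t+1 from by omega, habs]
  rcases abs_cases (A (2*t+5) - A (2*t+1)) with ⟨h, h'⟩ | ⟨h, h'⟩ <;>
    rw [h] <;>
    refine ⟨?_, ?_, ?_⟩ <;>
    simp only [h1, h2, h3, curly] <;>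
    split_ifs <;> omega

end Stmt4
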